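/- Let ψ be quadratic, ψ(y) = yᵀQy + bᵀy + c with 2Q ⪰ m_ψ·I positive definite, with minimizer y_opt. Let z minimize f(y) = ½(y−r)ᵀ(𝓛⊗I_d)(y−r) + Σ_{i∈𝓥_l} ψ(y_i), where 𝓛 is a graph Laplacian (so 𝓛·1 = 0 and 𝓛 symmetric). Then the center of mass of the informed agents equals the source: (1/|𝓥_l|) Σ_{i∈𝓥_l} z_i = y_opt. -/

import Mathlib

open Matrix
open scoped Kronecker

noncomputable def bigf {N d : ℕ} (𝓛 : Matrix (Fin N) (Fin N) ℝ)
    (r : EuclideanSpace ℝ (Fin N × Fin d)) (Vl : Finset (Fin N))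
    (ψ : EuclideanSpace ℝ (Fin d) → ℝ) (y : EuclideanSpace ℝ (Fin N × Fin d)) : ℝ :=
  (1 / 2) * ((fun p => y p - r p) ⬝ᵥ
      (𝓛 ⊗ₖ (1 : Matrix (Fin d) (Fin d) ℝ)).mulVec (fun p => y p - r p))
    + ∑ i ∈ Vl, ψ (WithLp.toLp 2 (fun j => y (i, j)))

theorem quad_coeff_zero (α β : ℝ) (h : ∀ t : ℝ, 0 ≤ β * t + α * t ^ 2) : β = 0 := by
  have ha : 0 < |α| + 1 := by positivity
  have h1 := h (-β / (|α| + 1))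
  have hle : α ≤ |α| := le_abs_self α
  have hne : |α| + 1 ≠ 0 := ne_of_gt ha
  rw [div_pow, neg_pow, ← mul_div_assoc, ← mul_div_assoc, div_add_div _ _ hne (by positivity)] at h1
  rw [le_div_iff₀ (by positivity)] at h1
  have h2 : 0 ≤ (|α| + 1) * β ^ 2 * (α - (|α| + 1)) := by nlinarith [h1]
  have h3 : (|α| + 1) * β ^ 2 ≤ 0 := by
    nlinarith [h2, mul_nonneg (mul_nonneg ha.le (sq_nonneg β)) (sub_nonneg.mpr hle)]
  have h4 : β ^ 2 ≤ 0 := by by_contra hh; push_neg at hh; nlinarith [mul_pos ha hh]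
  have h5 : β ^ 2 = 0 := le_antisymm h4 (sq_nonneg β)
  exact pow_eq_zero_iff (by norm_num) |>.mp h5

theorem lap_kron_const {N : ℕ} (G : SimpleGraph (Fin N)) [DecidableRel G.Adj] (d : ℕ) (j : Fin d) :
    (G.lapMatrix ℝ ⊗ₖ (1 : Matrix (Fin d) (Fin d) ℝ)).mulVec
      (fun p : Fin N × Fin d => if p.2 = j then (1:ℝ) else 0) = 0 := by
  funext p
  have h0 := congrFun (G.lapMatrix_mulVec_const_eq_zero (R := ℝ)) p.1
  simp only [Matrix.mulVec, dotProduct, mul_one] at h0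
  simp only [Matrix.mulVec, dotProduct, Fintype.sum_prod_type, Matrix.kroneckerMap_apply,
    Matrix.one_apply, mul_ite, mul_one, mul_zero, ite_mul, zero_mul,
    Finset.sum_ite_eq, Finset.sum_ite_eq', Finset.mem_univ, if_true, Pi.zero_apply]
  by_cases hp : p.2 = j <;> simp [hp, h0]

theorem stmt9 {N d : ℕ} [NeZero N] [NeZero d]
    (G : SimpleGraph (Fin N)) [DecidableRel G.Adj]
    (Vl : Finset (Fin N)) (hVl : Vl.Nonempty)
    (hconn : ∀ v : Fin N, ∃ w ∈ Vl, G.Reachable v w)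
    (Q : Matrix (Fin d) (Fin d) ℝ) (hQ : Q.IsSymm) (b : Fin d → ℝ) (c mψ : ℝ)
    (hmψ : 0 < mψ)
    (hQpd : ((2 : ℝ) • Q - mψ • (1 : Matrix (Fin d) (Fin d) ℝ)).PosSemidef)
    (ψ : EuclideanSpace ℝ (Fin d) → ℝ)
    (hψ : ∀ y : EuclideanSpace ℝ (Fin d), ψ y = y ⬝ᵥ Q.mulVec y + b ⬝ᵥ y + c)
    (yopt : EuclideanSpace ℝ (Fin d))
    (hyopt : (2 : ℝ) • Q.mulVec yopt + b = 0)
    (r : EuclideanSpace ℝ (Fin N × Fin d))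
    (z : EuclideanSpace ℝ (Fin N × Fin d))
    (hz : ∀ y, bigf (G.lapMatrix ℝ) r Vl ψ z ≤ bigf (G.lapMatrix ℝ) r Vl ψ y) :
    ∀ j : Fin d, ((Vl.card : ℝ))⁻¹ * ∑ i ∈ Vl, z (i, j) = yopt j := by
  classical
  set 𝓛 := G.lapMatrix ℝ with h𝓛
  set M := 𝓛 ⊗ₖ (1 : Matrix (Fin d) (Fin d) ℝ) with hM
  have hL : 𝓛ᵀ = 𝓛 := G.isSymm_lapMatrix (R := ℝ)
  have hMsymm : Mᵀ = M := by
    rw [hM, ← Matrix.kroneckerMap_transpose, hL, Matrix.transpose_one]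
  set s : Fin d → ℝ := fun k => ∑ i ∈ Vl, z (i, k) with hs
  -- first-order condition in each coordinate
  have key : ∀ j : Fin d, 2 * Q.mulVec s j + (Vl.card : ℝ) * b j = 0 := by
    intro j
    set u : Fin N × Fin d → ℝ := fun p => if p.2 = j then (1:ℝ) else 0 with hu
    have hMu : M.mulVec u = 0 := lap_kron_const G d j
    have hcross1 : ∀ w : Fin N × Fin d → ℝ, u ⬝ᵥ M.mulVec w = 0 := by
      intro w
      rw [Matrix.dotProduct_mulVec]
      have huM : u ᵥ* M = 0 := by rw [← hMsymm, Matrix.vecMul_transpose, hMu]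
      rw [huM, zero_dotProduct]
    have hcross2 : ∀ w : Fin N × Fin d → ℝ, w ⬝ᵥ M.mulVec u = 0 := by
      intro w; rw [hMu, dotProduct_zero]
    set e : Fin d → ℝ := Pi.single j 1 with he
    have hue : ∀ i : Fin N, ∀ k : Fin d, u (i, k) = e k := by
      intro i k; simp [hu, he, Pi.single_apply]
    set β : ℝ := ∑ i ∈ Vl, (2 * Q.mulVec (fun k => z (i, k)) j + b j) with hβ
    set α : ℝ := (Vl.card : ℝ) * Q j j with hα
    have hQe : ∀ w : Fin d → ℝ, w ⬝ᵥ Q.mulVec e = Q.mulVec w j := by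
      intro w
      rw [Matrix.dotProduct_mulVec]
      have : w ᵥ* Q = Q.mulVec w := by rw [← hQ.eq, Matrix.vecMul_transpose, hQ.eq]
      rw [this, he, dotProduct_single, mul_one]
    have heQ : ∀ w : Fin d → ℝ, e ⬝ᵥ Q.mulVec w = Q.mulVec w j := by
      intro w; rw [he, single_dotProduct, one_mul]
    have hexp : ∀ t : ℝ, bigf 𝓛 r Vl ψ (WithLp.toLp 2 (fun p => z p + t * u p)) =
        bigf 𝓛 r Vl ψ z + (β * t + α * t ^ 2) := by
      intro t
      unfold bigf
      simp only [WithLp.ofLp_toLp]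
      have hw : (fun p => (z p + t * u p) - r p) =
          (fun p : Fin N × Fin d => z p - r p) + t • u := by
        funext p; simp [Pi.add_apply, Pi.smul_apply, smul_eq_mul]; ring
      rw [hw]
      rw [Matrix.mulVec_add, Matrix.mulVec_smul, dotProduct_add, add_dotProduct,
        add_dotProduct, dotProduct_smul, smul_dotProduct, smul_dotProduct,
        dotProduct_smul, hcross1, hcross2, hMu]
      simp only [dotProduct_zero, smul_eq_mul, mul_zero, add_zero]
      have hψsum : ∀ i : Fin N, ψ (WithLp.toLp 2 (fun k => z (i, k) + t * u (i, k))) =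
          ψ (WithLp.toLp 2 (fun k => z (i, k))) + ((2 * Q.mulVec (fun k => z (i, k)) j + b j) * t
            + Q j j * t ^ 2) := by
        intro i
        have hv : (fun k => z (i, k) + t * u (i, k)) =
            (fun k => z (i, k)) + t • e := by
          funext k; simp [hue i k, Pi.add_apply, Pi.smul_apply, smul_eq_mul]
        rw [hψ, hψ]
        simp only [WithLp.ofLp_toLp]
        show ((fun k => z (i, k) + t * u (i, k)) ⬝ᵥ _) + _ + _ = _
        rw [hv]
        rw [Matrix.mulVec_add, Matrix.mulVec_smul, dotProduct_add, add_dotProduct,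
          add_dotProduct, dotProduct_smul, smul_dotProduct, smul_dotProduct,
          dotProduct_smul, dotProduct_add, dotProduct_smul]
        rw [hQe, heQ, hQe]
        have heQe : (Q.mulVec e) j = Q j j := by simp [he, Matrix.mulVec_single]
        have hbe : b ⬝ᵥ e = b j := by rw [he, dotProduct_single, mul_one]
        simp only [smul_eq_mul, hbe, heQe]
        ring
      have hsum : ∑ i ∈ Vl, ψ (WithLp.toLp 2 (fun k => z (i, k) + t * u (i, k))) =
          ∑ i ∈ Vl, ψ (WithLp.toLp 2 (fun k => z (i, k))) + (β * t + α * t ^ 2) := by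
        calc ∑ i ∈ Vl, ψ (WithLp.toLp 2 (fun k => z (i, k) + t * u (i, k)))
            = ∑ i ∈ Vl, (ψ (WithLp.toLp 2 (fun k => z (i, k))) +
              ((2 * Q.mulVec (fun k => z (i, k)) j + b j) * t + Q j j * t ^ 2)) := by
              exact Finset.sum_congr rfl fun i _ => hψsum i
          _ = _ := by
              rw [Finset.sum_add_distrib, Finset.sum_add_distrib, ← Finset.sum_mul,
                Finset.sum_const, nsmul_eq_mul, hβ, hα]
              ring
      rw [hsum]
      ring
    have hquad : ∀ t : ℝ, 0 ≤ β * t + α * t ^ 2 := by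
      intro t
      have := hz (WithLp.toLp 2 (fun p => z p + t * u p))
      rw [hexp t] at this
      linarith
    have hβ0 : β = 0 := quad_coeff_zero α β hquad
    have hQs : Q.mulVec s j = ∑ i ∈ Vl, Q.mulVec (fun k => z (i, k)) j := by
      simp only [Matrix.mulVec, dotProduct, hs, Finset.mul_sum]
      exact Finset.sum_comm
    rw [hβ] at hβ0
    rw [Finset.sum_add_distrib, ← Finset.mul_sum, Finset.sum_const, nsmul_eq_mul] at hβ0
    rw [hQs]
    linarith [hβ0]
  -- invertibility step
  set x : Fin d → ℝ := fun k => s k - (Vl.card : ℝ) * yopt k with hx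
  have hQx : Q.mulVec x = 0 := by
    funext j
    have hx' : x = s - (Vl.card : ℝ) • fun k => yopt k := by
      funext k; simp [hx, Pi.sub_apply, Pi.smul_apply, smul_eq_mul]
    have hyj : 2 * Q.mulVec yopt j + b j = 0 := by
      have := congrFun hyopt j
      simpa [Pi.add_apply, Pi.smul_apply, smul_eq_mul] using this
    have hkj := key j
    have hety : (Q.mulVec fun k => yopt k) = Q.mulVec yopt := rfl
    rw [hx', Matrix.mulVec_sub, Matrix.mulVec_smul, hety]
    simp only [Pi.sub_apply, Pi.smul_apply, smul_eq_mul, Pi.zero_apply]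
    have h2 : (Vl.card : ℝ) * (2 * (Q *ᵥ yopt) j + b j) = 0 := by rw [hyj, mul_zero]
    nlinarith [h2, hkj]
  have hxx : x ⬝ᵥ x = 0 := by
    have hpsd := hQpd.dotProduct_mulVec_nonneg x
    have hstar : star x = x := by simp
    rw [hstar, Matrix.sub_mulVec, Matrix.smul_mulVec, Matrix.smul_mulVec,
      Matrix.one_mulVec, hQx, smul_zero, zero_sub, dotProduct_neg, dotProduct_smul,
      smul_eq_mul, Left.nonneg_neg_iff] at hpsd
    have h1 : 0 ≤ x ⬝ᵥ x := by
      simpa [dotProduct] using Finset.sum_nonneg fun k _ => mul_self_nonneg (x k)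
    nlinarith
  have hx0 : x = 0 := dotProduct_self_eq_zero.mp hxx
  intro j
  have hsj : s j = (Vl.card : ℝ) * yopt j := by
    have := congrFun hx0 j
    simp only [hx, Pi.zero_apply] at this
    linarith
  have hcard : (Vl.card : ℝ) ≠ 0 :=
    Nat.cast_ne_zero.mpr (Finset.card_pos.mpr hVl).ne'
  show (Vl.card : ℝ)⁻¹ * s j = yopt j
  rw [hsj, inv_mul_cancel_left₀ hcard]
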